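/- Let n ≥ 1, let K be a symmetric positive definite n×n real matrix, let S be a symmetric n×n real matrix, and let r ∈ {1,…,n}. Let K′ be the rerooted matrix associated to K and r, and S′ the rerooted sample matrix associated to S and r. Then the log-likelihood values agree: log det K − tr(S K) = log det K′ − tr(S′ K′). -/
import Mathlib


open Finset Matrix

/-- The Farris transform coordinates `p` of a symmetric `n × n` matrix
`K = (k_{ij})` (with rows/columns thought of as indexed by `1, …, n`,
realized as `Fin n` via `i ↦ i.succ`), extended by a root index `0`:
`p_{0i} = p_{i0} = ∑_{j=1}^n k_{ij}` and `p_{ij} = −k_{ij}` for `i, j ≥ 1`. -/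
noncomputable def farrisP {n : ℕ} (K : Matrix (Fin n) (Fin n) ℝ) :
    Fin (n + 1) → Fin (n + 1) → ℝ := fun i j =>
  Fin.cases (motive := fun _ => ℝ)
    (Fin.cases (motive := fun _ => ℝ) 0 (fun j' => ∑ t, K j' t) j)
    (fun i' => Fin.cases (motive := fun _ => ℝ) (∑ t, K i' t)
      (fun j' => -K i' j') j) i

/-- The rerooted matrix `K′` associated to a symmetric matrix `K` and a new
root `r ∈ {1, …, n}`:  `K′_{rr} = ∑_{t=1}^n p_{0t}`, `K′_{rj} = K′_{jr} = −p_{0j}`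
for `j ≠ r`, `K′_{ii} = ∑_{t=0, t≠i}^n p_{it}` for `i ≠ r`, and
`K′_{ij} = −p_{ij}` for distinct `i, j ≠ r`. -/
noncomputable def rerootK {n : ℕ} (K : Matrix (Fin n) (Fin n) ℝ) (r : Fin n) :
    Matrix (Fin n) (Fin n) ℝ :=
  Matrix.of fun i j =>
    if i = r then
      (if j = r then ∑ t : Fin n, farrisP K 0 t.succ else -farrisP K 0 j.succ)
    else if j = r then -farrisP K 0 i.succ
    else if i = j then ∑ t ∈ Finset.univ.erase (i.succ : Fin (n + 1)), farrisP K i.succ t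
    else -farrisP K i.succ j.succ

/-- The rerooted sample matrix `S′` associated to a symmetric matrix
`S = (s_{ij})` and `r`:  `s′_{rr} = s_{rr}`, `s′_{rj} = s′_{jr} = s_{rr} − s_{rj}`
for `j ≠ r`, `s′_{ii} = s_{rr} + s_{ii} − 2 s_{ri}` for `i ≠ r`, and
`s′_{ij} = s_{rr} − s_{ri} − s_{rj} + s_{ij}` for distinct `i, j ≠ r`. -/
noncomputable def rerootS {n : ℕ} (S : Matrix (Fin n) (Fin n) ℝ) (r : Fin n) :
    Matrix (Fin n) (Fin n) ℝ :=
  Matrix.of fun i j =>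
    if i = r then (if j = r then S r r else S r r - S r j)
    else if j = r then S r r - S r i
    else if i = j then S r r + S i i - 2 * S r i
    else S r r - S r i - S r j + S i j


noncomputable def Amat (n : ℕ) (r : Fin n) : Matrix (Fin n) (Fin n) ℝ :=
  Matrix.of fun i j => if i = r then -1 else if i = j then 1 else 0

lemma Amat_mul_apply {n : ℕ} (r : Fin n) (M : Matrix (Fin n) (Fin n) ℝ) (i j : Fin n) :
    (Amat n r * M) i j = if i = r then -(∑ t, M t j) else M i j := by
  by_cases h : i = r <;>
    simp [Matrix.mul_apply, Amat, h, ite_mul, Finset.sum_ite_eq, neg_mul]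

lemma mul_Amat_transpose_apply {n : ℕ} (r : Fin n) (M : Matrix (Fin n) (Fin n) ℝ)
    (i j : Fin n) :
    (M * (Amat n r)ᵀ) i j = if j = r then -(∑ t, M i t) else M i j := by
  by_cases h : j = r <;>
    simp [Matrix.mul_apply, Amat, h, mul_ite, Finset.sum_ite_eq', mul_neg]

lemma mul_Amat_apply {n : ℕ} (r : Fin n) (M : Matrix (Fin n) (Fin n) ℝ) (i j : Fin n) :
    (M * Amat n r) i j = (if j = r then 0 else M i j) - M i r := by
  rw [Matrix.mul_apply]
  have h : ∀ t : Fin n, M i t * Amat n r t j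
      = (if t = r then -M i t else 0)
        + (if t = j then (if t = r then 0 else M i t) else 0) := by
    intro t
    by_cases h1 : t = r <;> by_cases h2 : t = j <;> simp_all [Amat]
  simp_rw [h]
  rw [Finset.sum_add_distrib, Finset.sum_ite_eq', Finset.sum_ite_eq']
  simp only [Finset.mem_univ, if_true]
  by_cases hj : j = r <;> simp [hj] <;> ring

lemma Amat_transpose_mul_apply {n : ℕ} (r : Fin n) (M : Matrix (Fin n) (Fin n) ℝ)
    (i j : Fin n) :
    ((Amat n r)ᵀ * M) i j = (if i = r then 0 else M i j) - M r j := by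
  have h : (Amat n r)ᵀ * M = (Mᵀ * Amat n r)ᵀ := by
    rw [Matrix.transpose_mul, Matrix.transpose_transpose]
  rw [h, Matrix.transpose_apply, mul_Amat_apply]
  simp

lemma Amat_mul_Amat {n : ℕ} (r : Fin n) : Amat n r * Amat n r = 1 := by
  ext i j
  rw [Amat_mul_apply]
  by_cases h : i = r
  · have hcol : ∀ j : Fin n, ∑ t, (Amat n r) t j = if j = r then -1 else 0 := by
      intro j
      have h2 : ∀ t : Fin n, (Amat n r) t j
          = (if t = r then -1 else 0)
            + (if t = j then (if t = r then 0 else 1) else 0) := by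
        intro t
        by_cases h1 : t = r <;> by_cases h2 : t = j <;> simp_all [Amat]
      simp_rw [h2]
      rw [Finset.sum_add_distrib, Finset.sum_ite_eq', Finset.sum_ite_eq']
      by_cases hj : j = r <;> simp [hj]
    rw [if_pos h, hcol]
    by_cases hj : j = r
    · simp [Matrix.one_apply, h.trans hj.symm, hj]
    · simp [Matrix.one_apply, hj, show ¬ i = j from fun e => hj (e ▸ h)]
  · simp [Amat, h, Matrix.one_apply, mul_one]

lemma farrisP_succ_succ {n : ℕ} (K : Matrix (Fin n) (Fin n) ℝ) (i j : Fin n) :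
    farrisP K i.succ j.succ = -K i j := rfl

lemma farrisP_zero_succ {n : ℕ} (K : Matrix (Fin n) (Fin n) ℝ) (j : Fin n) :
    farrisP K 0 j.succ = ∑ t, K j t := rfl

lemma farrisP_succ_zero {n : ℕ} (K : Matrix (Fin n) (Fin n) ℝ) (i : Fin n) :
    farrisP K i.succ 0 = ∑ t, K i t := rfl

lemma erase_sum_farrisP {n : ℕ} (K : Matrix (Fin n) (Fin n) ℝ) (i : Fin n) :
    ∑ t ∈ Finset.univ.erase (i.succ : Fin (n + 1)), farrisP K i.succ t = K i i := by
  rw [Finset.sum_erase_eq_sub (Finset.mem_univ _), Fin.sum_univ_succ]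
  simp only [farrisP_succ_zero, farrisP_succ_succ, Finset.sum_neg_distrib]
  ring

lemma rerootK_eq {n : ℕ} (K : Matrix (Fin n) (Fin n) ℝ) (hK : K.IsSymm) (r : Fin n) :
    rerootK K r = Amat n r * K * (Amat n r)ᵀ := by
  ext i j
  rw [mul_Amat_transpose_apply]
  simp_rw [Amat_mul_apply]
  have hsym : ∀ a b : Fin n, K a b = K b a := fun a b => hK.apply b a
  by_cases hi : i = r <;> by_cases hj : j = r
  · simp [rerootK, hi, hj, farrisP_zero_succ]
    exact Finset.sum_comm
  · simp [rerootK, hi, hj, farrisP_zero_succ]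
    exact Finset.sum_congr rfl fun t _ => hsym j t
  · simp [rerootK, hi, hj, farrisP_zero_succ]
  · by_cases hij : i = j
    · simp [rerootK, hi, hj, hij, erase_sum_farrisP]
      rw [Fin.sum_univ_succ]
      simp only [farrisP_succ_zero, farrisP_succ_succ, Finset.sum_neg_distrib]
      ring
    · simp [rerootK, hi, hj, hij, farrisP_succ_succ]

lemma rerootS_eq {n : ℕ} (S : Matrix (Fin n) (Fin n) ℝ) (hS : S.IsSymm) (r : Fin n) :
    rerootS S r = (Amat n r)ᵀ * S * Amat n r := by
  ext i j
  rw [mul_Amat_apply, Amat_transpose_mul_apply, Amat_transpose_mul_apply]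
  have hsym : ∀ a b : Fin n, S a b = S b a := fun a b => hS.apply b a
  by_cases hi : i = r <;> by_cases hj : j = r
  · simp [rerootS, hi, hj]
  · simp [rerootS, hi, hj]; ring
  · simp [rerootS, hi, hj]; linarith [hsym i r]
  · by_cases hij : i = j
    · simp [rerootS, hi, hj, hij]; linarith [hsym j r]
    · simp [rerootS, hi, hj, hij]; linarith [hsym i r]

/-- **Invariance of the log-likelihood under rerooting** (Equation (19) in
the proof of Theorem 2).  For a symmetric positive definite matrix `K`, a
symmetric matrix `S` and a root `r ∈ {1, …, n}`,
`log det K − tr(S K) = log det K′ − tr(S′ K′)`. -/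
theorem loglik_reroot_eq {n : ℕ} (hn : 1 ≤ n)
    (K : Matrix (Fin n) (Fin n) ℝ) (hK : K.IsSymm) (hKpd : K.PosDef)
    (r : Fin n) (S : Matrix (Fin n) (Fin n) ℝ) (hS : S.IsSymm) :
    Real.log K.det - (S * K).trace
      = Real.log (rerootK K r).det - (rerootS S r * rerootK K r).trace := by
  have hA := Amat_mul_Amat (n := n) r
  have hKeq := rerootK_eq K hK r
  have hSeq := rerootS_eq S hS r
  have hdet : (rerootK K r).det = K.det := by
    rw [hKeq, Matrix.det_mul, Matrix.det_mul, Matrix.det_transpose]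
    have h1 : (Amat n r).det * (Amat n r).det = 1 := by
      rw [← Matrix.det_mul, hA, Matrix.det_one]
    calc (Amat n r).det * K.det * (Amat n r).det
        = (Amat n r).det * (Amat n r).det * K.det := by ring
      _ = K.det := by rw [h1, one_mul]
  have htr : (rerootS S r * rerootK K r).trace = (S * K).trace := by
    rw [hKeq, hSeq]
    have e1 : (Amat n r)ᵀ * S * Amat n r * (Amat n r * K * (Amat n r)ᵀ)
        = (Amat n r)ᵀ * (S * K) * (Amat n r)ᵀ := by
      simp only [Matrix.mul_assoc]
      rw [← Matrix.mul_assoc (Amat n r) (Amat n r) (K * (Amat n r)ᵀ), hA, Matrix.one_mul]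
    rw [e1, Matrix.trace_mul_cycle, ← Matrix.transpose_mul, hA, Matrix.transpose_one,
      Matrix.one_mul]
  rw [hdet, htr]
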